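/- Let P be a rooted finite poset and Q any finite poset, and K a field. Then the ideal J_{P,Q} is generated by squarefree binomials, i.e. J_{P,Q} equals the ideal of T generated by the squarefree binomials it contains. -/

import Mathlib

open MvPolynomial

attribute [local instance] Classical.propDecidable

/-- The `K`-algebra map sending the variable `t_φ` (indexed by an isotone map
`φ : P →o Q`) to the monomial `∏_{p ∈ P} x_{p, φ(p)}`. -/
noncomputable def isotonianMap (K P Q : Type) [Field K] [PartialOrder P] [Fintype P]
    [PartialOrder Q] [Fintype Q] :
    MvPolynomial (P →o Q) K →ₐ[K] MvPolynomial (P × Q) K :=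
  aeval fun φ : P →o Q => ∏ p : P, X (p, φ p)

/-- The defining ideal `J_{P,Q}` of the isotonian algebra `K[P,Q]`. -/
noncomputable def isotonianIdeal (K P Q : Type) [Field K] [PartialOrder P] [Fintype P]
    [PartialOrder Q] [Fintype Q] :
    Ideal (MvPolynomial (P →o Q) K) :=
  RingHom.ker (isotonianMap K P Q)

/-- A binomial `monomial u 1 - monomial v 1` which is squarefree: all exponents are at most 1. -/
def IsSquarefreeBinomial {σ K : Type} [Field K] (f : MvPolynomial σ K) : Prop :=
  ∃ u v : σ →₀ ℕ, (∀ i, u i ≤ 1) ∧ (∀ i, v i ≤ 1) ∧ f = monomial u 1 - monomial v 1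

/- ### Combinatorial part -/

section Comb

variable {P Q : Type} [PartialOrder P] [PartialOrder Q]

/-- Connectivity by squarefree exchange moves. -/
inductive Conn : Multiset (P →o Q) → Multiset (P →o Q) → Prop
  | refl (A : Multiset (P →o Q)) : Conn A A
  | trans {A B C : Multiset (P →o Q)} : Conn A B → Conn B C → Conn A C
  | move (C F G : Multiset (P →o Q)) (hF : F.Nodup) (hG : G.Nodup)
      (hpt : ∀ p : P, F.map (fun φ => φ p) = G.map (fun φ => φ p)) :
      Conn (C + F) (C + G)

lemma Conn.cons (χ : P →o Q) {A B : Multiset (P →o Q)} (h : Conn A B) :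
    Conn (χ ::ₘ A) (χ ::ₘ B) := by
  induction h with
  | refl A => exact Conn.refl _
  | trans h1 h2 IH1 IH2 => exact IH1.trans IH2
  | move C F G hF hG hpt =>
    have : ∀ D : Multiset (P →o Q), χ ::ₘ (C + D) = (χ ::ₘ C) + D := by
      intro D; rw [Multiset.cons_add]
    rw [this F, this G]
    exact Conn.move _ F G hF hG hpt

lemma Conn.eval {A B : Multiset (P →o Q)} (h : Conn A B) (p : P) :
    A.map (fun φ => φ p) = B.map (fun φ => φ p) := by
  induction h with
  | refl A => rfl
  | trans h1 h2 IH1 IH2 => exact IH1.trans IH2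
  | move C F G hF hG hpt => rw [Multiset.map_add, Multiset.map_add, hpt p]

/-- Preimage of a sub-multiset under `map`. -/
lemma exists_preimage_of_le_map {α β : Type} {f : α → β} :
    ∀ {s : Multiset β} {t : Multiset α}, s ≤ t.map f → ∃ u, u ≤ t ∧ u.map f = s := by
  intro s
  induction s using Multiset.induction with
  | empty => intro t _; exact ⟨0, Multiset.zero_le t, rfl⟩
  | cons a s IH =>
    intro t h
    have ha : a ∈ t.map f := Multiset.mem_of_le h (Multiset.mem_cons_self a s)
    obtain ⟨x, hxt, hfx⟩ := Multiset.mem_map.mp ha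
    obtain ⟨t', rfl⟩ := Multiset.exists_cons_of_mem hxt
    have h' : s ≤ t'.map f := by
      rw [Multiset.map_cons, hfx] at h
      exact (Multiset.cons_le_cons_iff a).mp h
    obtain ⟨u, hu, hmap⟩ := IH h'
    exact ⟨x ::ₘ u, Multiset.cons_le_cons x hu, by rw [Multiset.map_cons, hfx, hmap]⟩

/-- Pair up two multisets with equal images. -/
lemma exists_pairing {α β γ : Type} {f : α → γ} {g : β → γ} :
    ∀ (X : Multiset α) (Y : Multiset β), X.map f = Y.map g →
      ∃ Z : Multiset (α × β), Z.map Prod.fst = X ∧ Z.map Prod.snd = Y ∧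
        ∀ z ∈ Z, f z.1 = g z.2 := by
  intro X
  induction X using Multiset.induction with
  | empty =>
    intro Y h
    have : Y = 0 := by
      have h2 : Y.map g = 0 := by rw [← h, Multiset.map_zero]
      exact Multiset.map_eq_zero.mp h2
    exact ⟨0, rfl, by rw [this]; rfl, by intro z hz; exact absurd hz (Multiset.notMem_zero z)⟩
  | cons a X IH =>
    intro Y h
    have ha : f a ∈ Y.map g := by
      rw [← h, Multiset.map_cons]; exact Multiset.mem_cons_self _ _
    obtain ⟨y, hyY, hgy⟩ := Multiset.mem_map.mp ha
    obtain ⟨Y', rfl⟩ := Multiset.exists_cons_of_mem hyY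
    have h' : X.map f = Y'.map g := by
      rw [Multiset.map_cons, Multiset.map_cons, ← hgy] at h
      exact (Multiset.cons_inj_right _).mp h
    obtain ⟨Z, hZ1, hZ2, hZ3⟩ := IH Y' h'
    refine ⟨(a, y) ::ₘ Z, ?_, ?_, ?_⟩
    · rw [Multiset.map_cons, hZ1]
    · rw [Multiset.map_cons, hZ2]
    · intro z hz
      rcases Multiset.mem_cons.mp hz with rfl | hz'
      · exact hgy.symm
      · exact hZ3 z hz'

lemma list_le_multiset {α : Type} {l : List α} {s : Multiset α}
    (hnd : l.Nodup) (hmem : ∀ x ∈ l, x ∈ s) : (l : Multiset α) ≤ s := by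
  classical
  rw [Multiset.le_iff_count]
  intro a
  by_cases ha : a ∈ l
  · have h1 : Multiset.count a (l : Multiset α) ≤ 1 :=
      Multiset.nodup_iff_count_le_one.mp (Multiset.coe_nodup.mpr hnd) a
    have h2 : 1 ≤ Multiset.count a s := Multiset.one_le_count_iff_mem.mpr (hmem a ha)
    omega
  · have : Multiset.count a (l : Multiset α) = 0 := by
      rw [Multiset.count_eq_zero]
      simpa using ha
    omega

end Comb
section Step

variable {P Q : Type} [PartialOrder P] [PartialOrder Q]

/-- Restriction of an isotone map to the complement of a point. -/
def res (pstar : P) (φ : P →o Q) : ({x : P // x ≠ pstar} →o Q) :=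
  ⟨fun x => φ x.1, fun _ _ h => φ.mono h⟩

@[simp] lemma res_apply (pstar : P) (φ : P →o Q) (x : {x : P // x ≠ pstar}) :
    res pstar φ x = φ x.1 := rfl

variable {pstar r : P}

/-- Extension of an isotone map on the complement of a maximal point. -/
noncomputable def extMap (hmax : ∀ y : P, pstar ≤ y → y = pstar) (hr : r < pstar)
    (hrmax : ∀ z, z < pstar → z ≤ r)
    (g : {x : P // x ≠ pstar} →o Q) (q : Q) (hq : g ⟨r, hr.ne⟩ ≤ q) : P →o Q := by
  refine ⟨fun x => if hx : x = pstar then q else g ⟨x, hx⟩, ?_⟩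
  intro x y hxy
  by_cases hx : x = pstar
  · by_cases hy : y = pstar
    · simp [hx, hy]
    · exact absurd (hmax y (hx ▸ hxy)) hy
  · by_cases hy : y = pstar
    · simp only [dif_neg hx, dif_pos hy]
      have hxr : x ≤ r := hrmax x (lt_of_le_of_ne (hy ▸ hxy) hx)
      calc g ⟨x, hx⟩ ≤ g ⟨r, hr.ne⟩ := g.mono hxr
        _ ≤ q := hq
    · simp only [dif_neg hx, dif_neg hy]
      exact g.mono hxy

lemma res_extMap (hmax : ∀ y : P, pstar ≤ y → y = pstar) (hr : r < pstar)
    (hrmax : ∀ z, z < pstar → z ≤ r) (g : {x : P // x ≠ pstar} →o Q) (q : Q)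
    (hq : g ⟨r, hr.ne⟩ ≤ q) :
    res pstar (extMap hmax hr hrmax g q hq) = g := by
  apply OrderHom.ext
  funext x
  show (if hx : x.1 = pstar then q else g ⟨x.1, hx⟩) = g x
  rw [dif_neg x.2]

lemma extMap_pstar (hmax : ∀ y : P, pstar ≤ y → y = pstar) (hr : r < pstar)
    (hrmax : ∀ z, z < pstar → z ≤ r) (g : {x : P // x ≠ pstar} →o Q) (q : Q)
    (hq : g ⟨r, hr.ne⟩ ≤ q) :
    extMap hmax hr hrmax g q hq pstar = q := by
  show (if hx : pstar = pstar then q else _) = q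
  rw [dif_pos rfl]

/-- Lifting a connectivity proof along the restriction map. -/
lemma lift_conn (hmax : ∀ y : P, pstar ≤ y → y = pstar) (hr : r < pstar)
    (hrmax : ∀ z, z < pstar → z ≤ r)
    {C' D' : Multiset ({x : P // x ≠ pstar} →o Q)} (h : Conn C' D') :
    ∀ A : Multiset (P →o Q), A.map (res pstar) = C' →
      ∃ A₂, Conn A A₂ ∧ A₂.map (res pstar) = D' := by
  induction h with
  | refl C' => exact fun A hA => ⟨A, Conn.refl A, hA⟩
  | trans h1 h2 IH1 IH2 =>
    intro A hA
    obtain ⟨A₁, hc1, h1'⟩ := IH1 A hA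
    obtain ⟨A₂, hc2, h2'⟩ := IH2 A₁ h1'
    exact ⟨A₂, hc1.trans hc2, h2'⟩
  | move C F G hF hG hpt =>
    intro A hA
    have hFle : F ≤ A.map (res pstar) := by
      rw [hA]; exact Multiset.le_add_left _ _
    obtain ⟨Ft, hFtle, hFtmap⟩ := exists_preimage_of_le_map hFle
    have hAeq : A = (A - Ft) + Ft := (tsub_add_cancel_of_le hFtle).symm
    have hDmap : (A - Ft).map (res pstar) = C := by
      have h1 : (A - Ft).map (res pstar) + F = C + F := by
        rw [← hFtmap, ← Multiset.map_add, ← hAeq, hA, hFtmap]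
      exact add_right_cancel h1
    have hrv : Ft.map (fun e => e r) = G.map (fun g => g ⟨r, hr.ne⟩) := by
      have h1 : Ft.map (fun e => e r) = F.map (fun g => g ⟨r, hr.ne⟩) := by
        rw [← hFtmap, Multiset.map_map]; rfl
      rw [h1]; exact hpt _
    obtain ⟨Z, hZ1, hZ2, hZ3⟩ := exists_pairing Ft G hrv
    have hZle : ∀ z : {z // z ∈ Z}, z.1.2 ⟨r, hr.ne⟩ ≤ z.1.1 pstar := by
      intro z
      have h := hZ3 z.1 z.2
      rw [← h]
      exact z.1.1.mono hr.le
    set Gt : Multiset (P →o Q) :=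
      Z.attach.map (fun z => extMap hmax hr hrmax z.1.2 (z.1.1 pstar) (hZle z)) with hGt
    have hmap_attach : ∀ {δ : Type} (h : (P →o Q) × ({x : P // x ≠ pstar} →o Q) → δ),
        Z.attach.map (fun z => h z.1) = Z.map h := by
      intro δ h
      conv_rhs => rw [← Multiset.attach_map_val Z]
      rw [Multiset.map_map]
      rfl
    have hGtres : Gt.map (res pstar) = G := by
      rw [hGt, Multiset.map_map]
      have : (res pstar ∘ fun z : {z // z ∈ Z} =>
          extMap hmax hr hrmax z.1.2 (z.1.1 pstar) (hZle z)) = fun z => z.1.2 := by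
        funext z
        exact res_extMap hmax hr hrmax _ _ _
      rw [this, hmap_attach Prod.snd, hZ2]
    have hGttop : Gt.map (fun φ => φ pstar) = Ft.map (fun φ => φ pstar) := by
      rw [hGt, Multiset.map_map]
      have : ((fun φ : P →o Q => φ pstar) ∘ fun z : {z // z ∈ Z} =>
          extMap hmax hr hrmax z.1.2 (z.1.1 pstar) (hZle z)) = fun z => z.1.1 pstar := by
        funext z
        exact extMap_pstar hmax hr hrmax _ _ _
      rw [this, hmap_attach (fun z => z.1 pstar), ← hZ1, Multiset.map_map]
      rfl
    have hFtnd : Ft.Nodup := Multiset.Nodup.of_map (res pstar) (hFtmap ▸ hF)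
    have hGtnd : Gt.Nodup := Multiset.Nodup.of_map (res pstar) (hGtres ▸ hG)
    have hpt' : ∀ p : P, Ft.map (fun φ => φ p) = Gt.map (fun φ => φ p) := by
      intro p
      by_cases hp : p = pstar
      · rw [hp, hGttop]
      · have e1 : (fun φ : P →o Q => φ p) =
            (fun g : {x : P // x ≠ pstar} →o Q => g ⟨p, hp⟩) ∘ res pstar := rfl
        rw [e1, ← Multiset.map_map, ← Multiset.map_map, hFtmap, hGtres, hpt]
    refine ⟨(A - Ft) + Gt, ?_, ?_⟩
    · have hm := Conn.move (A - Ft) Ft Gt hFtnd hGtnd hpt'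
      rwa [← hAeq] at hm
    · rw [Multiset.map_add, hDmap, hGtres]

end Step
section Cycle

variable {P Q : Type} [PartialOrder P] [PartialOrder Q] {pstar : P}

/-- The linkage relation for the cycle construction: consecutive (newer, older). -/
def CycRel (pstar : P) (B : Multiset (P →o Q)) (x y : P →o Q) : Prop :=
  ∃ f ∈ B, res pstar f = res pstar x ∧ f pstar = y pstar

/-- Extract a list of "blue" elements witnessing the chain linkage. -/
lemma blues {B : Multiset (P →o Q)} :
    ∀ seg : List (P →o Q), seg.Chain' (CycRel pstar B) →
      ∃ gs : List (P →o Q), (∀ g ∈ gs, g ∈ B) ∧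
        gs.map (res pstar) = (seg.dropLast).map (res pstar) ∧
        gs.map (fun φ => φ pstar) = (seg.tail).map (fun φ => φ pstar) := by
  intro seg
  induction seg with
  | nil => exact fun _ => ⟨[], by simp, by simp, by simp⟩
  | cons x rest IH =>
    intro hch
    cases rest with
    | nil => exact ⟨[], by simp, by simp, by simp⟩
    | cons y rest' =>
      obtain ⟨hxy, hch'⟩ := List.isChain_cons_cons.mp hch
      obtain ⟨gs, hgs1, hgs2, hgs3⟩ := IH hch'
      obtain ⟨f, hfB, hf1, hf2⟩ := hxy
      refine ⟨f :: gs, ?_, ?_, ?_⟩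
      · intro g hg
        rcases List.mem_cons.mp hg with rfl | hg'
        · exact hfB
        · exact hgs1 g hg'
      · have hdl : (x :: y :: rest').dropLast = x :: (y :: rest').dropLast := by
          simp [List.dropLast]
        rw [hdl, List.map_cons, List.map_cons, hgs2, hf1]
      · rw [List.tail_cons, List.map_cons, List.map_cons, hgs3, hf2]
        rfl

/-- The cycle construction: produces a move creating a common element. -/
lemma cycle_aux {A B : Multiset (P →o Q)}
    (hres : A.map (res pstar) = B.map (res pstar))
    (htop : A.map (fun φ => φ pstar) = B.map (fun φ => φ pstar)) :
    ∀ (fuel : ℕ) (l : List (P →o Q)), l ≠ [] → (∀ e ∈ l, e ∈ A) →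
      ((l.map (res pstar)).Nodup) → l.Chain' (CycRel pstar B) →
      Multiset.card A + 1 ≤ fuel + l.length →
      ∃ F G : Multiset (P →o Q), F ≤ A ∧ F.Nodup ∧ G.Nodup ∧
        (∀ p : P, F.map (fun φ => φ p) = G.map (fun φ => φ p)) ∧
        F.map (res pstar) = G.map (res pstar) ∧
        F.map (fun φ => φ pstar) = G.map (fun φ => φ pstar) ∧
        ∃ χ, χ ∈ G ∧ χ ∈ B := by
  intro fuel
  induction fuel with
  | zero =>
    intro l hne hmem hnd hch hlen
    exfalso
    have hle : (l.map (res pstar) : Multiset _) ≤ A.map (res pstar) := by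
      apply list_le_multiset hnd
      intro x hx
      obtain ⟨e, hel, rfl⟩ := List.mem_map.mp hx
      exact Multiset.mem_map_of_mem _ (hmem e hel)
    have hcard := Multiset.card_le_card hle
    simp only [Multiset.coe_card, List.length_map, Multiset.card_map] at hcard
    omega
  | succ fuel IH =>
    intro l hne hmem hnd hch hlen
    obtain ⟨e, l', rfl⟩ := List.exists_cons_of_ne_nil hne
    have heA : e ∈ A := hmem e List.mem_cons_self
    have hetop : e pstar ∈ B.map (fun φ => φ pstar) := by
      rw [← htop]
      exact Multiset.mem_map_of_mem _ heA
    obtain ⟨f, hfB, hfe⟩ := Multiset.mem_map.mp hetop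
    by_cases hb : res pstar f ∈ (e :: l').map (res pstar)
    · -- close the cycle
      obtain ⟨em, hem_mem, hem⟩ := List.mem_map.mp hb
      obtain ⟨pre, post, hsplit⟩ := List.append_of_mem hem_mem
      set seg : List (P →o Q) := pre ++ [em] with hseg
      have hlseg : e :: l' = seg ++ post := by
        rw [hsplit, hseg, List.append_assoc]
        rfl
      have hsegne : seg ≠ [] := by simp [hseg]
      have hsegch : seg.Chain' (CycRel pstar B) := by
        rw [hlseg] at hch
        exact (List.isChain_append.mp hch).1
      have hsegnd : (seg.map (res pstar)).Nodup := by
        rw [hlseg, List.map_append] at hnd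
        exact hnd.of_append_left
      have hsegmem : ∀ x ∈ seg, x ∈ A := by
        intro x hx
        apply hmem
        rw [hlseg]
        exact List.mem_append_left post hx
      have hheade : ∃ segt, seg = e :: segt := by
        cases pre with
        | nil =>
          simp only [List.nil_append] at hsplit
          injection hsplit with h1 h2
          exact ⟨[], by simp [hseg, h1]⟩
        | cons a pre' =>
          simp only [List.cons_append] at hsplit
          injection hsplit with h1 h2
          exact ⟨pre' ++ [em], by simp [hseg, h1]⟩
      obtain ⟨segt, hsegt⟩ := hheade
      obtain ⟨gs, hgs1, hgs2, hgs3⟩ := blues seg hsegch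
      have hdl : seg.dropLast = pre := by
        rw [hseg]
        exact List.dropLast_concat
      -- res-equality of F and G
      have hres_eq : (seg : Multiset (P →o Q)).map (res pstar) =
          ((f :: gs : List (P →o Q)) : Multiset (P →o Q)).map (res pstar) := by
        rw [Multiset.map_coe, Multiset.map_coe]
        apply Multiset.coe_eq_coe.mpr
        rw [List.map_cons, hgs2, hdl]
        rw [hseg, List.map_append, List.map_singleton, hem]
        exact List.perm_append_singleton _ _
      have hGnd : ((f :: gs : List (P →o Q)) : Multiset (P →o Q)).Nodup := by
        apply Multiset.Nodup.of_map (res pstar)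
        rw [← hres_eq, Multiset.map_coe]
        exact Multiset.coe_nodup.mpr hsegnd
      have hgs3' : gs.map (fun φ => φ pstar) = segt.map (fun φ => φ pstar) := by
        rw [hgs3, hsegt, List.tail_cons]
      have hlist : seg.map (fun φ => φ pstar) = (f :: gs).map (fun φ => φ pstar) := by
        rw [hsegt, List.map_cons, List.map_cons, hgs3', hfe]
      have htop_eq : (seg : Multiset (P →o Q)).map (fun φ => φ pstar) =
          ((f :: gs : List (P →o Q)) : Multiset (P →o Q)).map (fun φ => φ pstar) := by
        rw [Multiset.map_coe, Multiset.map_coe, hlist]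
      refine ⟨(seg : Multiset (P →o Q)), ((f :: gs : List (P →o Q)) : Multiset (P →o Q)),
        ?_, ?_, hGnd, ?_, hres_eq, htop_eq, ⟨f, by simp, hfB⟩⟩
      · exact list_le_multiset (hsegnd.of_map _) hsegmem
      · exact Multiset.coe_nodup.mpr (hsegnd.of_map _)
      · intro p
        by_cases hp : p = pstar
        · subst hp; exact htop_eq
        · have e1 : (fun φ : P →o Q => φ p) =
              (fun g : {x : P // x ≠ pstar} →o Q => g ⟨p, hp⟩) ∘ res pstar := rfl
          rw [e1, ← Multiset.map_map, ← Multiset.map_map, hres_eq]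
    · -- extend
      have hbA : res pstar f ∈ A.map (res pstar) := by
        rw [hres]
        exact Multiset.mem_map_of_mem _ hfB
      obtain ⟨e', he'A, he'⟩ := Multiset.mem_map.mp hbA
      apply IH (e' :: e :: l')
      · simp
      · intro x hx
        rcases List.mem_cons.mp hx with rfl | hx'
        · exact he'A
        · exact hmem x hx'
      · rw [List.map_cons]
        exact List.nodup_cons.mpr ⟨by rw [he']; exact hb, hnd⟩
      · exact List.isChain_cons_cons.mpr ⟨⟨f, hfB, by rw [he'], hfe⟩, hch⟩
      · simp only [List.length_cons] at hlen ⊢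
        omega

end Cycle
section Assemble

variable {P Q : Type} [PartialOrder P] [PartialOrder Q] {pstar : P}

lemma cycle_lemma {A B : Multiset (P →o Q)}
    (hres : A.map (res pstar) = B.map (res pstar))
    (htop : A.map (fun φ => φ pstar) = B.map (fun φ => φ pstar))
    (hA : A ≠ 0) :
    ∃ F G : Multiset (P →o Q), F ≤ A ∧ F.Nodup ∧ G.Nodup ∧
      (∀ p : P, F.map (fun φ => φ p) = G.map (fun φ => φ p)) ∧
      F.map (res pstar) = G.map (res pstar) ∧
      F.map (fun φ => φ pstar) = G.map (fun φ => φ pstar) ∧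
      ∃ χ, χ ∈ G ∧ χ ∈ B := by
  obtain ⟨e, he⟩ := Multiset.exists_mem_of_ne_zero hA
  apply cycle_aux hres htop (Multiset.card A) [e]
  · simp
  · simpa using he
  · simp
  · exact List.isChain_singleton _
  · simp

lemma conn_of_res_eq :
    ∀ (n : ℕ) (A B : Multiset (P →o Q)), Multiset.card A = n →
      A.map (res pstar) = B.map (res pstar) →
      A.map (fun φ => φ pstar) = B.map (fun φ => φ pstar) → Conn A B := by
  intro n
  induction n using Nat.strong_induction_on with
  | _ n IH =>
    intro A B hcard hres htop
    by_cases hex : ∃ χ, χ ∈ A ∧ χ ∈ B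
    · obtain ⟨χ, hχA, hχB⟩ := hex
      obtain ⟨A', rfl⟩ := Multiset.exists_cons_of_mem hχA
      obtain ⟨B', rfl⟩ := Multiset.exists_cons_of_mem hχB
      rw [Multiset.map_cons, Multiset.map_cons] at hres htop
      have hres' := (Multiset.cons_inj_right _).mp hres
      have htop' := (Multiset.cons_inj_right _).mp htop
      have hn : 1 ≤ n := by rw [Multiset.card_cons] at hcard; omega
      have hcard' : Multiset.card A' = n - 1 := by
        rw [Multiset.card_cons] at hcard; omega
      exact Conn.cons χ (IH (n-1) (by omega) A' B' hcard' hres' htop')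
    · by_cases hA0 : A = 0
      · have hB0 : B = 0 := by
          have hmz : B.map (res pstar) = 0 := by rw [← hres, hA0, Multiset.map_zero]
          exact Multiset.map_eq_zero.mp hmz
        rw [hA0, hB0]
        exact Conn.refl 0
      · obtain ⟨F, G, hFle, hFnd, hGnd, hpt, hFGres, hFGtop, χ, hχG, hχB⟩ :=
          cycle_lemma hres htop hA0
        have hAeq : A = (A - F) + F := (tsub_add_cancel_of_le hFle).symm
        have hmove : Conn A ((A - F) + G) := by
          have hm := Conn.move (A - F) F G hFnd hGnd hpt
          rwa [← hAeq] at hm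
        set A₂ := (A - F) + G with hA₂
        have hA₂res : A₂.map (res pstar) = B.map (res pstar) := by
          rw [hA₂, Multiset.map_add, ← hFGres, ← Multiset.map_add, ← hAeq, hres]
        have hA₂top : A₂.map (fun φ => φ pstar) = B.map (fun φ => φ pstar) := by
          rw [hA₂, Multiset.map_add, ← hFGtop, ← Multiset.map_add, ← hAeq, htop]
        have hA₂card : Multiset.card A₂ = n := by
          have hcf : Multiset.card G = Multiset.card F := by
            have hc := congrArg Multiset.card hFGtop
            simpa using hc.symm
          rw [hA₂, Multiset.card_add, hcf, ← Multiset.card_add, ← hAeq, hcard]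
        have hχA₂ : χ ∈ A₂ := by
          rw [hA₂]; exact Multiset.mem_add.mpr (Or.inr hχG)
        have hn : 1 ≤ n := by
          rw [← hcard]
          exact Multiset.card_pos.mpr hA0
        obtain ⟨A₂', hA₂'⟩ := Multiset.exists_cons_of_mem hχA₂
        obtain ⟨B', rfl⟩ := Multiset.exists_cons_of_mem hχB
        rw [hA₂'] at hA₂res hA₂top hA₂card
        rw [Multiset.map_cons, Multiset.map_cons] at hA₂res hA₂top
        have hres' := (Multiset.cons_inj_right _).mp hA₂res
        have htop' := (Multiset.cons_inj_right _).mp hA₂top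
        have hcard' : Multiset.card A₂' = n - 1 := by
          rw [Multiset.card_cons] at hA₂card; omega
        have h2 : Conn A₂ (χ ::ₘ B') := by
          rw [hA₂']
          exact Conn.cons χ (IH (n-1) (by omega) A₂' B' hcard' hres' htop')
        exact hmove.trans h2

end Assemble

lemma conn_of_equiv (Q : Type) [PartialOrder Q] :
    ∀ (n : ℕ) (P : Type) [Fintype P] [PartialOrder P],
      Fintype.card P = n →
      (∃ p₀ : P, ∀ x : P, p₀ ≤ x) →
      (∀ a b c : P, a ≤ c → b ≤ c → a ≤ b ∨ b ≤ a) →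
      ∀ A B : Multiset (P →o Q),
        (∀ p : P, A.map (fun φ => φ p) = B.map (fun φ => φ p)) → Conn A B := by
  intro n
  induction n using Nat.strong_induction_on with
  | _ n IH =>
    intro P _ _ hcard hmin hroot A B hAB
    obtain ⟨p₀, hp₀⟩ := hmin
    have hpos : 0 < Fintype.card P := Fintype.card_pos_iff.mpr ⟨p₀⟩
    by_cases h1 : Fintype.card P = 1
    · obtain ⟨a, ha⟩ := Fintype.card_eq_one_iff.mp h1
      have hABeq : A = B := by
        have hinj : Function.Injective (fun φ : P →o Q => φ a) := by
          intro φ ψ h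
          apply OrderHom.ext
          funext x
          rw [show x = a from ha x]
          exact h
        exact Multiset.map_injective hinj (hAB a)
      rw [hABeq]
      exact Conn.refl B
    · have h2 : 2 ≤ Fintype.card P := by omega
      obtain ⟨pstar, -, hpmax'⟩ : ∃ i ∈ (Finset.univ : Finset P), ∀ x ∈ Finset.univ, ¬ i < x := by
        obtain ⟨i, hi, h⟩ := Finset.exists_maximal (s := Finset.univ) ⟨p₀, Finset.mem_univ p₀⟩
        exact ⟨i, hi, fun x hx hlt => lt_irrefl _ (lt_of_lt_of_le hlt (h hx hlt.le))⟩
      have hmax : ∀ y : P, pstar ≤ y → y = pstar := by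
        intro y hy
        by_contra hne
        exact hpmax' y (Finset.mem_univ y) (lt_of_le_of_ne hy (Ne.symm hne))
      have hp0star : p₀ < pstar := by
        rcases lt_or_eq_of_le (hp₀ pstar) with h | h
        · exact h
        · exfalso
          have hall : ∀ x : P, x = pstar := fun x => hmax x (h ▸ hp₀ x)
          have hone : Fintype.card P = 1 := Fintype.card_eq_one_iff.mpr ⟨pstar, hall⟩
          omega
      obtain ⟨r, hrS, hrmax'⟩ : ∃ i ∈ Finset.univ.filter (fun z => z < pstar),
          ∀ x ∈ Finset.univ.filter (fun z => z < pstar), ¬ i < x := by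
        obtain ⟨i, hi, h⟩ := Finset.exists_maximal (s := Finset.univ.filter (fun z => z < pstar))
          ⟨p₀, by simp [hp0star]⟩
        exact ⟨i, hi, fun x hx hlt => lt_irrefl _ (lt_of_lt_of_le hlt (h hx hlt.le))⟩
      have hr : r < pstar := by
        simpa using hrS
      have hrmax : ∀ z, z < pstar → z ≤ r := by
        intro z hz
        rcases hroot z r pstar hz.le hr.le with h | h
        · exact h
        · rcases lt_or_eq_of_le h with hlt | heq
          · exact absurd hlt (hrmax' z (by simp [hz]))
          · exact heq.ge
      have hcardP' : Fintype.card {x : P // x ≠ pstar} = n - 1 := by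
        have h3 : Fintype.card {x : P // ¬ (x = pstar)} =
            Fintype.card P - Fintype.card {x : P // x = pstar} :=
          Fintype.card_subtype_compl _
        rw [Fintype.card_subtype_eq, hcard] at h3
        exact h3
      have hmin' : ∃ q₀ : {x : P // x ≠ pstar}, ∀ x, q₀ ≤ x :=
        ⟨⟨p₀, hp0star.ne⟩, fun x => hp₀ x.1⟩
      have hroot' : ∀ a b c : {x : P // x ≠ pstar}, a ≤ c → b ≤ c → a ≤ b ∨ b ≤ a := by
        intro a b c hac hbc
        exact hroot a.1 b.1 c.1 hac hbc
      have hres_eq : ∀ p' : {x : P // x ≠ pstar},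
          (A.map (res pstar)).map (fun g => g p') =
          (B.map (res pstar)).map (fun g => g p') := by
        intro p'
        rw [Multiset.map_map, Multiset.map_map]
        exact hAB p'.1
      have hconn' : Conn (A.map (res pstar)) (B.map (res pstar)) :=
        IH (n-1) (by omega) {x : P // x ≠ pstar} hcardP' hmin' hroot' _ _ hres_eq
      obtain ⟨A₂, hconnA, hA₂res⟩ := lift_conn hmax hr hrmax hconn' A rfl
      have htop2 : A₂.map (fun φ => φ pstar) = B.map (fun φ => φ pstar) := by
        rw [← hconnA.eval pstar]
        exact hAB pstar
      exact hconnA.trans (conn_of_res_eq (Multiset.card A₂) A₂ B rfl hA₂res htop2)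
section Algebra

variable (P Q : Type) [PartialOrder P] [Fintype P] [PartialOrder Q] [Fintype Q]

/-- The exponent vector of the image monomial. -/
noncomputable def Emap (u : (P →o Q) →₀ ℕ) : (P × Q) →₀ ℕ :=
  Finsupp.equivFunOnFinite.symm fun pq =>
    Multiset.count pq.2 ((Finsupp.toMultiset u).map fun φ => φ pq.1)

lemma Emap_apply (u : (P →o Q) →₀ ℕ) (p : P) (q : Q) :
    Emap P Q u (p, q) = Multiset.count q ((Finsupp.toMultiset u).map fun φ => φ p) := by
  simp [Emap]

lemma Emap_eq_iff (u v : (P →o Q) →₀ ℕ) :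
    Emap P Q u = Emap P Q v ↔
      ∀ p : P, (Finsupp.toMultiset u).map (fun φ => φ p) =
        (Finsupp.toMultiset v).map (fun φ => φ p) := by
  constructor
  · intro h p
    rw [Multiset.ext]
    intro q
    have h2 : Emap P Q u (p, q) = Emap P Q v (p, q) := by rw [h]
    rwa [Emap_apply, Emap_apply] at h2
  · intro h
    apply Finsupp.ext
    rintro ⟨p, q⟩
    rw [Emap_apply, Emap_apply, h p]

lemma Emap_single (φ : P →o Q) (n : ℕ) :
    Emap P Q (Finsupp.single φ n) = n • ∑ p : P, Finsupp.single (p, φ p) 1 := by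
  apply Finsupp.ext
  rintro ⟨p₁, q₁⟩
  have hL : Emap P Q (Finsupp.single φ n) (p₁, q₁) = if φ p₁ = q₁ then n else 0 := by
    rw [Emap_apply, Finsupp.toMultiset_single, Multiset.map_nsmul, Multiset.map_singleton,
      Multiset.count_nsmul, Multiset.count_singleton]
    by_cases h : φ p₁ = q₁
    · rw [if_pos h.symm, if_pos h, mul_one]
    · rw [if_neg (fun hh => h hh.symm), if_neg h, mul_zero]
  have hR : (n • ∑ p : P, Finsupp.single (p, φ p) 1) (p₁, q₁) =
      if φ p₁ = q₁ then n else 0 := by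
    rw [Finsupp.smul_apply, Finsupp.finset_sum_apply]
    rw [Finset.sum_eq_single p₁]
    · rw [Finsupp.single_apply]
      by_cases h : φ p₁ = q₁
      · rw [if_pos (by rw [h]), if_pos h, smul_eq_mul, mul_one]
      · rw [if_neg (fun hh => h (congrArg Prod.snd hh)), if_neg h, smul_eq_mul, mul_zero]
    · intro b _ hb
      rw [Finsupp.single_apply, if_neg (fun hh => hb (congrArg Prod.fst hh))]
    · intro h
      exact absurd (Finset.mem_univ p₁) h
  rw [hL, hR]

lemma Emap_add (u v : (P →o Q) →₀ ℕ) :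
    Emap P Q (u + v) = Emap P Q u + Emap P Q v := by
  apply Finsupp.ext
  rintro ⟨p, q⟩
  rw [Finsupp.add_apply, Emap_apply, Emap_apply, Emap_apply, Finsupp.toMultiset_add,
    Multiset.map_add, Multiset.count_add]

variable (K : Type) [Field K]

lemma prod_X_single (φ : P →o Q) (s : Finset P) :
    (∏ p ∈ s, (X (p, φ p) : MvPolynomial (P × Q) K)) =
      monomial (∑ p ∈ s, Finsupp.single (p, φ p) 1) 1 := by
  induction s using Finset.cons_induction with
  | empty => simp [monomial_zero']
  | cons a s ha IH =>
    rw [Finset.prod_cons, Finset.sum_cons, IH]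
    have hX : (X (a, φ a) : MvPolynomial (P × Q) K) =
        monomial (Finsupp.single (a, φ a) 1) 1 := by
      rw [← pow_one (X (a, φ a) : MvPolynomial (P × Q) K), X_pow_eq_monomial]
    rw [hX, monomial_mul, one_mul]

lemma Phi_monomial (u : (P →o Q) →₀ ℕ) :
    isotonianMap K P Q (monomial u 1) = monomial (Emap P Q u) 1 := by
  induction u using Finsupp.induction with
  | zero =>
    have hE : Emap P Q 0 = 0 := by
      apply Finsupp.ext; rintro ⟨p, q⟩; simp [Emap_apply]
    have h1 : (monomial (0 : (P →o Q) →₀ ℕ) (1 : K)) = 1 := by simp [monomial_zero']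
    have h2 : (monomial (0 : (P × Q) →₀ ℕ) (1 : K)) = 1 := by simp [monomial_zero']
    rw [hE, h1, h2, map_one]
  | single_add φ n u hφ hn IH =>
    have hM : (monomial (Finsupp.single φ n + u) (1 : K)) =
        monomial (Finsupp.single φ n) 1 * monomial u 1 := by
      rw [monomial_mul, one_mul]
    rw [hM, map_mul, IH, Emap_add, Emap_single]
    have hXn : (monomial (Finsupp.single φ n) (1 : K)) = X φ ^ n :=
      (X_pow_eq_monomial).symm
    rw [hXn, map_pow]
    have hXφ : isotonianMap K P Q (X φ) = ∏ p : P, X (p, φ p) := by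
      simp [isotonianMap, aeval_X]
    rw [hXφ, prod_X_single, monomial_pow, one_pow, monomial_mul, one_mul]

lemma Phi_monomial_c (u : (P →o Q) →₀ ℕ) (c : K) :
    isotonianMap K P Q (monomial u c) = monomial (Emap P Q u) c := by
  have h1 : (monomial u c : MvPolynomial (P →o Q) K) = C c * monomial u 1 := by
    rw [C_mul_monomial, mul_one]
  have h2 : (monomial (Emap P Q u) c : MvPolynomial (P × Q) K) =
      C c * monomial (Emap P Q u) 1 := by
    rw [C_mul_monomial, mul_one]
  rw [h1, h2, map_mul, Phi_monomial]
  congr 1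
  simp [isotonianMap, aeval_C, MvPolynomial.algebraMap_eq]

lemma fiber_sum (f : MvPolynomial (P →o Q) K) (hf : isotonianMap K P Q f = 0)
    (u₀ : (P →o Q) →₀ ℕ) :
    ∑ u ∈ f.support.filter (fun u => Emap P Q u = Emap P Q u₀), coeff u f = 0 := by
  have h1 : (0 : MvPolynomial (P × Q) K) =
      ∑ u ∈ f.support, monomial (Emap P Q u) (coeff u f) := by
    rw [← hf]
    conv_lhs => rw [← support_sum_monomial_coeff f]
    rw [map_sum]
    exact Finset.sum_congr rfl fun u _ => Phi_monomial_c P Q K u _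
  have h2 := congrArg (coeff (Emap P Q u₀)) h1
  rw [coeff_zero, coeff_sum] at h2
  have h3 : ∀ u ∈ f.support,
      coeff (Emap P Q u₀) (monomial (Emap P Q u) (coeff u f)) =
        if Emap P Q u = Emap P Q u₀ then coeff u f else 0 :=
    fun u _ => coeff_monomial _ _ _
  rw [Finset.sum_congr rfl h3] at h2
  rw [Finset.sum_filter]
  exact h2.symm

lemma conn_mem {A B : Multiset (P →o Q)} (h : Conn A B) :
    (monomial A.toFinsupp (1 : K) - monomial B.toFinsupp 1) ∈
      Ideal.span {f : MvPolynomial (P →o Q) K |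
        f ∈ isotonianIdeal K P Q ∧ IsSquarefreeBinomial f} := by
  induction h with
  | refl A => rw [sub_self]; exact zero_mem _
  | trans h1 h2 IH1 IH2 =>
    have h3 := add_mem IH1 IH2
    rwa [sub_add_sub_cancel] at h3
  | move D F G hF hG hpt =>
    have hEeq : Emap P Q F.toFinsupp = Emap P Q G.toFinsupp := by
      rw [Emap_eq_iff]
      intro p
      rw [Multiset.toFinsupp_toMultiset, Multiset.toFinsupp_toMultiset]
      exact hpt p
    have hker : (monomial F.toFinsupp (1 : K) - monomial G.toFinsupp 1) ∈
        isotonianIdeal K P Q := by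
      have hz : isotonianMap K P Q
          (monomial F.toFinsupp (1 : K) - monomial G.toFinsupp 1) = 0 := by
        rw [map_sub, Phi_monomial, Phi_monomial, hEeq, sub_self]
      exact RingHom.mem_ker.mpr hz
    have hsf : IsSquarefreeBinomial (monomial F.toFinsupp (1 : K) - monomial G.toFinsupp 1) := by
      refine ⟨F.toFinsupp, G.toFinsupp, ?_, ?_, rfl⟩
      · intro i
        rw [Multiset.toFinsupp_apply]
        exact Multiset.nodup_iff_count_le_one.mp hF i
      · intro i
        rw [Multiset.toFinsupp_apply]
        exact Multiset.nodup_iff_count_le_one.mp hG i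
    have hfac : (monomial (D + F).toFinsupp (1 : K) - monomial (D + G).toFinsupp 1) =
        monomial D.toFinsupp 1 * (monomial F.toFinsupp 1 - monomial G.toFinsupp 1) := by
      rw [mul_sub, monomial_mul, monomial_mul, one_mul,
        Multiset.toFinsupp_add, Multiset.toFinsupp_add]
    rw [hfac]
    exact Ideal.mul_mem_left _ _ (Ideal.subset_span ⟨hker, hsf⟩)

lemma binomial_mem (hmin : ∃ p₀ : P, ∀ x : P, p₀ ≤ x)
    (hroot : ∀ a b c : P, a ≤ c → b ≤ c → a ≤ b ∨ b ≤ a)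
    (u v : (P →o Q) →₀ ℕ) (hE : Emap P Q u = Emap P Q v) :
    (monomial u (1 : K) - monomial v 1) ∈ Ideal.span {f : MvPolynomial (P →o Q) K |
      f ∈ isotonianIdeal K P Q ∧ IsSquarefreeBinomial f} := by
  have hConn : Conn (Finsupp.toMultiset u) (Finsupp.toMultiset v) :=
    conn_of_equiv Q (Fintype.card P) P rfl hmin hroot _ _ ((Emap_eq_iff P Q u v).mp hE)
  have h := conn_mem P Q K hConn
  rwa [Finsupp.toMultiset_toFinsupp, Finsupp.toMultiset_toFinsupp] at h

lemma ker_sub (hmin : ∃ p₀ : P, ∀ x : P, p₀ ≤ x)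
    (hroot : ∀ a b c : P, a ≤ c → b ≤ c → a ≤ b ∨ b ≤ a) :
    ∀ (N : ℕ) (f : MvPolynomial (P →o Q) K), f.support.card ≤ N →
      f ∈ isotonianIdeal K P Q →
      f ∈ Ideal.span {f : MvPolynomial (P →o Q) K |
        f ∈ isotonianIdeal K P Q ∧ IsSquarefreeBinomial f} := by
  intro N
  induction N with
  | zero =>
    intro f h0 _
    have hf0 : f = 0 := support_eq_empty.mp (Finset.card_eq_zero.mp (Nat.le_zero.mp h0))
    rw [hf0]; exact zero_mem _
  | succ N IH =>
    intro f hcard hf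
    by_cases hf0 : f = 0
    · rw [hf0]; exact zero_mem _
    · have hne : f.support.Nonempty := by
        rw [Finset.nonempty_iff_ne_empty]
        intro h
        exact hf0 (support_eq_empty.mp h)
      obtain ⟨u₀, hu₀⟩ := hne
      have hc₀ : coeff u₀ f ≠ 0 := mem_support_iff.mp hu₀
      have hker : isotonianMap K P Q f = 0 := by
        have hf' : f ∈ RingHom.ker (isotonianMap K P Q) := hf
        exact RingHom.mem_ker.mp hf'
      have hsum := fiber_sum P Q K f hker u₀
      have hvex : ∃ v, v ∈ f.support ∧ Emap P Q v = Emap P Q u₀ ∧ v ≠ u₀ := by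
        by_contra hno
        push_neg at hno
        have hT : f.support.filter (fun u => Emap P Q u = Emap P Q u₀) = {u₀} := by
          apply Finset.Subset.antisymm
          · intro w hw
            rw [Finset.mem_filter] at hw
            rw [Finset.mem_singleton]
            exact hno w hw.1 hw.2
          · intro w hw
            rw [Finset.mem_singleton] at hw
            subst hw
            exact Finset.mem_filter.mpr ⟨hu₀, rfl⟩
        rw [hT, Finset.sum_singleton] at hsum
        exact hc₀ hsum
      obtain ⟨v, hvsupp, hEv, hvne⟩ := hvex
      have hbinS : (monomial u₀ (1 : K) - monomial v 1) ∈
          Ideal.span {f : MvPolynomial (P →o Q) K |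
            f ∈ isotonianIdeal K P Q ∧ IsSquarefreeBinomial f} :=
        binomial_mem P Q K hmin hroot u₀ v hEv.symm
      have hbinK : isotonianMap K P Q (monomial u₀ (1 : K) - monomial v 1) = 0 := by
        rw [map_sub, Phi_monomial, Phi_monomial, hEv, sub_self]
      have hbinJ : (monomial u₀ (1 : K) - monomial v 1) ∈ isotonianIdeal K P Q :=
        RingHom.mem_ker.mpr hbinK
      set c := coeff u₀ f with hc
      set bin : MvPolynomial (P →o Q) K := monomial u₀ 1 - monomial v 1 with hbin
      set g : MvPolynomial (P →o Q) K := f - C c * bin with hg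
      have hgJ : g ∈ isotonianIdeal K P Q := by
        rw [hg]
        exact sub_mem hf (Ideal.mul_mem_left _ _ hbinJ)
      have hcw : ∀ w, coeff w g = coeff w f -
          c * ((if u₀ = w then (1 : K) else 0) - (if v = w then 1 else 0)) := by
        intro w
        rw [hg, hbin, coeff_sub, coeff_C_mul, coeff_sub, coeff_monomial, coeff_monomial]
      have hgsupp : g.support ⊆ f.support.erase u₀ := by
        intro w hw
        have hwg : coeff w g ≠ 0 := mem_support_iff.mp hw
        rw [Finset.mem_erase]
        constructor
        · intro hwu
          apply hwg
          rw [hcw w, hwu, if_pos rfl, if_neg hvne, sub_zero, mul_one, ← hc, sub_self]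
        · by_cases hwv : w = v
          · rw [hwv]; exact hvsupp
          · by_cases hwu : u₀ = w
            · rw [← hwu]; exact hu₀
            · rw [mem_support_iff]
              intro h0
              apply hwg
              rw [hcw w, if_neg hwu, if_neg (fun hh => hwv hh.symm), h0]
              ring
      have hgcard : g.support.card ≤ N := by
        have h1 : g.support.card ≤ (f.support.erase u₀).card := Finset.card_le_card hgsupp
        rw [Finset.card_erase_of_mem hu₀] at h1
        omega
      have hgS := IH g hgcard hgJ
      have hfrepr : f = g + C c * bin := by rw [hg]; ring
      rw [hfrepr]
      exact add_mem hgS (Ideal.mul_mem_left _ _ hbinS)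

end Algebra

/-- If `P` is rooted, then `J_{P,Q}` is generated by the squarefree binomials it contains. -/
theorem statement6 (K P Q : Type) [Field K] [PartialOrder P] [Fintype P]
    [PartialOrder Q] [Fintype Q]
    (hmin : ∃ p₀ : P, ∀ x : P, p₀ ≤ x)
    (hroot : ∀ a b c : P, a ≤ c → b ≤ c → a ≤ b ∨ b ≤ a) :
    isotonianIdeal K P Q =
      Ideal.span {f | f ∈ isotonianIdeal K P Q ∧ IsSquarefreeBinomial f} := by
  apply le_antisymm
  · intro f hf
    exact ker_sub P Q K hmin hroot f.support.card f le_rfl hf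
  · exact Ideal.span_le.mpr fun f hf => hf.1
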